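/- Let V and W be finite-dimensional real inner product spaces, let J be a compatible complex structure on V, and let (e_1, …, e_n, η_1, …, η_d) be an orthonormal basis of V × W. Writing x¹ for the V-component of x ∈ V × W, one has Σ_{j=1}^{n} Σ_{k=1}^{d} ( ⟨e_j¹, η_k¹⟩² − ⟨e_j¹, J(η_k¹)⟩² ) = Σ_{k=1}^{d} Σ_{l=1}^{d} ( ⟨J(η_k¹), η_l¹⟩² − ⟨η_k¹, η_l¹⟩² ). (This is the normal-vector identity (MAIN) in the paper's Lemma 3.1, the algebraic core of the general second-variation formula in ℂP^{m/2} × M.) -/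

import Mathlib

open scoped RealInnerProductSpace

lemma key_sum {V W : Type*} [NormedAddCommGroup V] [InnerProductSpace ℝ V]
    [NormedAddCommGroup W] [InnerProductSpace ℝ W]
    {ι : Type*} [Fintype ι] (b : OrthonormalBasis ι ℝ (WithLp 2 (V × W)))
    (v u : V) :
    ∑ i, ⟪v, (b i).fst⟫ * ⟪u, (b i).fst⟫ = ⟪v, u⟫ := by
  have h := b.sum_inner_mul_inner ((WithLp.equiv 2 (V × W)).symm (v, 0))
      ((WithLp.equiv 2 (V × W)).symm (u, 0))
  simp only [WithLp.prod_inner_apply, WithLp.equiv_symm_apply, WithLp.ofLp_toLp, WithLp.ofLp_fst,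
    WithLp.ofLp_snd, WithLp.toLp_fst, WithLp.toLp_snd,
    inner_zero_left, inner_zero_right, add_zero] at h
  rw [← h]
  refine Finset.sum_congr rfl fun i _ => ?_
  rw [real_inner_comm ((b i).fst) u]

/-- Normal-vector identity (MAIN) in the paper's Lemma 3.1. -/
theorem stmt_0 {V W : Type*} [NormedAddCommGroup V] [InnerProductSpace ℝ V]
    [FiniteDimensional ℝ V] [NormedAddCommGroup W] [InnerProductSpace ℝ W]
    [FiniteDimensional ℝ W] (J : V →ₗ[ℝ] V)
    (hJiso : ∀ x y : V, ⟪J x, J y⟫ = ⟪x, y⟫)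
    (hJsq : ∀ x : V, J (J x) = -x)
    {n d : ℕ} (b : OrthonormalBasis (Fin n ⊕ Fin d) ℝ (WithLp 2 (V × W))) :
    ∑ j : Fin n, ∑ k : Fin d,
      (⟪(b (Sum.inl j)).fst, (b (Sum.inr k)).fst⟫ ^ 2
        - ⟪(b (Sum.inl j)).fst, J ((b (Sum.inr k)).fst)⟫ ^ 2)
      = ∑ k : Fin d, ∑ l : Fin d,
        (⟪J ((b (Sum.inr k)).fst), (b (Sum.inr l)).fst⟫ ^ 2
          - ⟪(b (Sum.inr k)).fst, (b (Sum.inr l)).fst⟫ ^ 2) := by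
  rw [Finset.sum_comm]
  refine Finset.sum_congr rfl fun k _ => ?_
  set η : Fin d → V := fun l => (b (Sum.inr l)).fst with hη
  -- split the left inner sum
  have h1 : ∑ i : Fin n ⊕ Fin d, ⟪η k, (b i).fst⟫ * ⟪η k, (b i).fst⟫ = ⟪η k, η k⟫ :=
    key_sum b (η k) (η k)
  have h2 : ∑ i : Fin n ⊕ Fin d, ⟪J (η k), (b i).fst⟫ * ⟪J (η k), (b i).fst⟫
      = ⟪J (η k), J (η k)⟫ := key_sum b (J (η k)) (J (η k))
  rw [Fintype.sum_sum_type] at h1 h2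
  rw [hJiso] at h2
  have e1 : ∑ j : Fin n, ⟪(b (Sum.inl j)).fst, η k⟫ ^ 2
      = ⟪η k, η k⟫ - ∑ l : Fin d, ⟪η k, η l⟫ ^ 2 := by
    rw [← h1]
    simp only [sq, real_inner_comm (η k)]
    ring
  have e2 : ∑ j : Fin n, ⟪(b (Sum.inl j)).fst, J (η k)⟫ ^ 2
      = ⟪η k, η k⟫ - ∑ l : Fin d, ⟪J (η k), η l⟫ ^ 2 := by
    rw [← h2]
    simp only [sq, real_inner_comm (J (η k))]
    ring
  rw [Finset.sum_sub_distrib, e1, e2, Finset.sum_sub_distrib]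
  ring
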